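/- For all a, b > 0, the Jensen–Shannon divergence JS(a,b) = ½( a ln(2a/(a+b)) + b ln(2b/(a+b)) ) and the squared Fisher distance ρ(a,b)² = 2(√a − √b)² satisfy 4·JS(a,b) ≤ ρ(a,b)². -/

import Mathlib

open Real

/-- For `t ≥ 1`, `log t ≤ (t - t⁻¹)/2`. -/
lemma logA {t : ℝ} (ht : 1 ≤ t) : Real.log t ≤ (t - t⁻¹) / 2 := by
  have ht0 : (0:ℝ) < t := lt_of_lt_of_le one_pos ht
  rw [Real.log_le_iff_le_exp ht0]
  have hti : t * t⁻¹ = 1 := mul_inv_cancel₀ ht0.ne'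
  have hinv : t⁻¹ ≤ 1 := inv_le_one_of_one_le₀ ht
  have hx : 0 ≤ (t - t⁻¹) / 2 := by linarith
  calc t ≤ 1 + (t - t⁻¹)/2 + ((t - t⁻¹)/2)^2/2 := by
        nlinarith [sq_nonneg ((t-1)^2), sq_nonneg (t-1), mul_pos ht0 ht0, sq_nonneg (t*t - 1)]
    _ ≤ Real.exp ((t - t⁻¹)/2) := Real.quadratic_le_exp_of_nonneg hx

/-- For `0 < t ≤ 1`, `(t - t⁻¹)/2 ≤ log t`. -/
lemma logB {t : ℝ} (h0 : 0 < t) (h1 : t ≤ 1) : (t - t⁻¹) / 2 ≤ Real.log t := by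
  have h1' : (1:ℝ) ≤ t⁻¹ := by
    have := mul_inv_cancel₀ h0.ne'
    nlinarith [mul_nonneg (inv_pos.mpr h0).le (by linarith : (0:ℝ) ≤ 1 - t)]
  have h := logA h1'
  rw [Real.log_inv, inv_inv] at h
  linarith

noncomputable def phi (b x : ℝ) : ℝ :=
  x * (Real.log (2*x) - Real.log (x+b)) + b * (Real.log (2*b) - Real.log (x+b))
    - (Real.sqrt x - Real.sqrt b)^2

lemma phi_hasDeriv (b : ℝ) (hb : 0 < b) {x : ℝ} (hx : 0 < x) :
    HasDerivAt (phi b)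
      (Real.log (2*x) - Real.log (x+b) - 1 + Real.sqrt b / Real.sqrt x) x := by
  have hxb : (0:ℝ) < x + b := by linarith
  have hsx : (0:ℝ) < Real.sqrt x := Real.sqrt_pos.mpr hx
  have hm : HasDerivAt (fun y : ℝ => 2*y) 2 x := by
    simpa using (hasDerivAt_id x).const_mul 2
  have ha : HasDerivAt (fun y : ℝ => y + b) 1 x := (hasDerivAt_id x).add_const b
  have h1 : HasDerivAt (fun y : ℝ => Real.log (2*y)) ((2*x)⁻¹ * 2) x := by
    exact (Real.hasDerivAt_log (by positivity)).comp x hm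
  have h2 : HasDerivAt (fun y : ℝ => Real.log (y+b)) ((x+b)⁻¹ * 1) x := by
    exact (Real.hasDerivAt_log hxb.ne').comp x ha
  have h3 : HasDerivAt (fun y : ℝ => y * (Real.log (2*y) - Real.log (y+b)))
      (1 * (Real.log (2*x) - Real.log (x+b)) + x * ((2*x)⁻¹ * 2 - (x+b)⁻¹ * 1)) x :=
    (hasDerivAt_id x).mul (h1.sub h2)
  have h4 : HasDerivAt (fun y : ℝ => b * (Real.log (2*b) - Real.log (y+b)))
      (b * (0 - (x+b)⁻¹ * 1)) x :=
    ((hasDerivAt_const x (Real.log (2*b))).sub h2).const_mul b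
  have h5 : HasDerivAt (fun y : ℝ => (Real.sqrt y - Real.sqrt b)^2)
      (2 * (Real.sqrt x - Real.sqrt b)^1 * (1 / (2 * Real.sqrt x))) x :=
    ((Real.hasDerivAt_sqrt hx.ne').sub_const (Real.sqrt b)).pow 2
  have h := (h3.add h4).sub h5
  have e1 : x * ((2*x)⁻¹ * 2 - (x+b)⁻¹ * 1) + b * (0 - (x+b)⁻¹ * 1) = 0 := by
    field_simp
    ring
  have e2 : 2 * (Real.sqrt x - Real.sqrt b)^1 * (1 / (2 * Real.sqrt x)) = 1 - Real.sqrt b / Real.sqrt x := by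
    field_simp
  exact h.congr_deriv (by linear_combination e1 - e2)

lemma phi_deriv_nonpos (b : ℝ) (hb : 0 < b) {x : ℝ} (hx : b ≤ x) :
    Real.log (2*x) - Real.log (x+b) - 1 + Real.sqrt b / Real.sqrt x ≤ 0 := by
  have hx0 : (0:ℝ) < x := lt_of_lt_of_le hb hx
  have hxb : (0:ℝ) < x + b := by linarith
  set p := Real.sqrt x with hpd
  set q := Real.sqrt b with hqd
  set r := Real.sqrt (x+b) with hrd
  set s := Real.sqrt (2*x/(x+b)) with hsd
  have hp0 : 0 < p := Real.sqrt_pos.mpr hx0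
  have hq0 : 0 < q := Real.sqrt_pos.mpr hb
  have hr0 : 0 < r := Real.sqrt_pos.mpr hxb
  have hs0 : 0 < s := Real.sqrt_pos.mpr (by positivity)
  have hp2 : p^2 = x := Real.sq_sqrt hx0.le
  have hq2 : q^2 = b := Real.sq_sqrt hb.le
  have hr2 : r^2 = x + b := Real.sq_sqrt hxb.le
  have hpq : q ≤ p := Real.sqrt_le_sqrt hx
  have h2 : (Real.sqrt 2)^2 = 2 := Real.sq_sqrt (by norm_num)
  have h2p : (0:ℝ) < Real.sqrt 2 := Real.sqrt_pos.mpr (by norm_num)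
  have hsr : s * r = Real.sqrt 2 * p := by
    rw [hsd, hrd, hpd, ← Real.sqrt_mul (by positivity), ← Real.sqrt_mul (by norm_num)]
    congr 1
    field_simp
  have hs2 : s^2 * r^2 = 2 * p^2 := by rw [← mul_pow, hsr, mul_pow, h2]
  have hlog : Real.log (2*x) - Real.log (x+b) = 2 * Real.log s := by
    rw [hsd, Real.log_sqrt (by positivity), Real.log_div (by positivity) hxb.ne']
    ring
  have hs1 : 1 ≤ s := by
    rw [hsd, show (1:ℝ) = Real.sqrt 1 by simp]
    apply Real.sqrt_le_sqrt
    rw [le_div_iff₀ hxb]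
    linarith
  have hA := logA hs1
  have key : p + q ≤ Real.sqrt 2 * r := by
    have hsq : (p+q)^2 ≤ (Real.sqrt 2 * r)^2 := by
      rw [mul_pow, h2]
      nlinarith [sq_nonneg (p - q)]
    calc p + q = Real.sqrt ((p+q)^2) := (Real.sqrt_sq (by positivity)).symm
      _ ≤ Real.sqrt ((Real.sqrt 2 * r)^2) := Real.sqrt_le_sqrt hsq
      _ = Real.sqrt 2 * r := Real.sqrt_sq (by positivity)
  have hgoal : s^2*p - p + s*q ≤ s*p := by
    rw [← mul_le_mul_iff_of_pos_right (show (0:ℝ) < r^2 by positivity)]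
    have e1 : (s^2*p - p + s*q)*r^2 = (s^2*r^2)*p - p*r^2 + (s*r)*(q*r) := by ring
    have e2 : (s*p)*r^2 = (s*r)*(p*r) := by ring
    rw [e1, e2, hs2, hsr, hr2]
    nlinarith [mul_nonneg (mul_nonneg hp0.le (sub_nonneg.mpr hpq)) (sub_nonneg.mpr key)]
  have expand : (s - s⁻¹ + q/p) * (s*p) = s^2*p - p + s*q := by
    field_simp
  have main : s - s⁻¹ + q/p ≤ 1 := by
    have h1 : (s - s⁻¹ + q/p) * (s*p) ≤ 1 * (s*p) := by
      rw [expand, one_mul]; exact hgoal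
    exact le_of_mul_le_mul_right h1 (by positivity)
  rw [hlog]
  linarith

lemma phi_deriv_nonneg (b : ℝ) (hb : 0 < b) {x : ℝ} (hx0 : 0 < x) (hx : x ≤ b) :
    0 ≤ Real.log (2*x) - Real.log (x+b) - 1 + Real.sqrt b / Real.sqrt x := by
  have hxb : (0:ℝ) < x + b := by linarith
  set p := Real.sqrt x with hpd
  set q := Real.sqrt b with hqd
  set r := Real.sqrt (x+b) with hrd
  set s := Real.sqrt (2*x/(x+b)) with hsd
  have hp0 : 0 < p := Real.sqrt_pos.mpr hx0
  have hq0 : 0 < q := Real.sqrt_pos.mpr hb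
  have hr0 : 0 < r := Real.sqrt_pos.mpr hxb
  have hs0 : 0 < s := Real.sqrt_pos.mpr (by positivity)
  have hp2 : p^2 = x := Real.sq_sqrt hx0.le
  have hq2 : q^2 = b := Real.sq_sqrt hb.le
  have hr2 : r^2 = x + b := Real.sq_sqrt hxb.le
  have hpq : p ≤ q := Real.sqrt_le_sqrt hx
  have h2 : (Real.sqrt 2)^2 = 2 := Real.sq_sqrt (by norm_num)
  have h2p : (0:ℝ) < Real.sqrt 2 := Real.sqrt_pos.mpr (by norm_num)
  have hsr : s * r = Real.sqrt 2 * p := by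
    rw [hsd, hrd, hpd, ← Real.sqrt_mul (by positivity), ← Real.sqrt_mul (by norm_num)]
    congr 1
    field_simp
  have hs2 : s^2 * r^2 = 2 * p^2 := by rw [← mul_pow, hsr, mul_pow, h2]
  have hlog : Real.log (2*x) - Real.log (x+b) = 2 * Real.log s := by
    rw [hsd, Real.log_sqrt (by positivity), Real.log_div (by positivity) hxb.ne']
    ring
  have hs1 : s ≤ 1 := by
    rw [hsd, show (1:ℝ) = Real.sqrt 1 by simp]
    apply Real.sqrt_le_sqrt
    rw [div_le_iff₀ hxb]
    linarith
  have hB := logB hs0 hs1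
  have key : p + q ≤ Real.sqrt 2 * r := by
    have hsq : (p+q)^2 ≤ (Real.sqrt 2 * r)^2 := by
      rw [mul_pow, h2]
      nlinarith [sq_nonneg (p - q)]
    calc p + q = Real.sqrt ((p+q)^2) := (Real.sqrt_sq (by positivity)).symm
      _ ≤ Real.sqrt ((Real.sqrt 2 * r)^2) := Real.sqrt_le_sqrt hsq
      _ = Real.sqrt 2 * r := Real.sqrt_sq (by positivity)
  have hgoal : s*p ≤ s^2*p - p + s*q := by
    rw [← mul_le_mul_iff_of_pos_right (show (0:ℝ) < r^2 by positivity)]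
    have e1 : (s^2*p - p + s*q)*r^2 = (s^2*r^2)*p - p*r^2 + (s*r)*(q*r) := by ring
    have e2 : (s*p)*r^2 = (s*r)*(p*r) := by ring
    rw [e1, e2, hs2, hsr, hr2]
    nlinarith [mul_nonneg (mul_nonneg hp0.le (sub_nonneg.mpr hpq)) (sub_nonneg.mpr key)]
  have expand : (s - s⁻¹ + q/p) * (s*p) = s^2*p - p + s*q := by
    field_simp
  have main : 1 ≤ s - s⁻¹ + q/p := by
    have h1 : 1 * (s*p) ≤ (s - s⁻¹ + q/p) * (s*p) := by
      rw [expand, one_mul]; exact hgoal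
    exact le_of_mul_le_mul_right h1 (by positivity)
  rw [hlog]
  linarith

lemma phi_self (b : ℝ) : phi b b = 0 := by
  unfold phi
  rw [show b + b = 2*b by ring]
  simp

lemma phi_nonpos (b : ℝ) (hb : 0 < b) {a : ℝ} (ha : 0 < a) : phi b a ≤ 0 := by
  rcases le_total b a with h | h
  · have hanti : AntitoneOn (phi b) (Set.Icc b a) := by
      apply antitoneOn_of_deriv_nonpos (convex_Icc b a)
      · intro x hx
        exact (phi_hasDeriv b hb (lt_of_lt_of_le hb hx.1)).continuousAt.continuousWithinAt
      · intro x hx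
        rw [interior_Icc] at hx
        exact (phi_hasDeriv b hb (lt_of_lt_of_le hb hx.1.le)).differentiableAt.differentiableWithinAt
      · intro x hx
        rw [interior_Icc] at hx
        rw [(phi_hasDeriv b hb (lt_of_lt_of_le hb hx.1.le)).deriv]
        exact phi_deriv_nonpos b hb hx.1.le
    have := hanti (Set.left_mem_Icc.mpr h) (Set.right_mem_Icc.mpr h) h
    rwa [phi_self] at this
  · have hmono : MonotoneOn (phi b) (Set.Icc a b) := by
      apply monotoneOn_of_deriv_nonneg (convex_Icc a b)
      · intro x hx
        exact (phi_hasDeriv b hb (lt_of_lt_of_le ha hx.1)).continuousAt.continuousWithinAt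
      · intro x hx
        rw [interior_Icc] at hx
        exact (phi_hasDeriv b hb (lt_of_lt_of_le ha hx.1.le)).differentiableAt.differentiableWithinAt
      · intro x hx
        rw [interior_Icc] at hx
        rw [(phi_hasDeriv b hb (lt_of_lt_of_le ha hx.1.le)).deriv]
        exact phi_deriv_nonneg b hb (lt_of_lt_of_le ha hx.1.le) hx.2.le
    have := hmono (Set.left_mem_Icc.mpr h) (Set.right_mem_Icc.mpr h) h
    rwa [phi_self] at this

/-- `4·JS(a,b) ≤ ρ(a,b)²` for positive reals. -/
theorem four_js_le_fisher_sq (a b : ℝ) (ha : 0 < a) (hb : 0 < b) :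
    4 * ((1 / 2) * (a * Real.log (2 * a / (a + b)) + b * Real.log (2 * b / (a + b))))
      ≤ 2 * (Real.sqrt a - Real.sqrt b) ^ 2 := by
  have hab : (0:ℝ) < a + b := by linarith
  have h := phi_nonpos b hb ha
  unfold phi at h
  rw [Real.log_div (by positivity) hab.ne', Real.log_div (by positivity) hab.ne']
  linarith
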